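/- Let X, Y be real normed linear spaces, A ⊆ X an open convex set, and F : A → Y a mapping that is C^{1,1} on A. If X admits an equivalent norm |·| with modulus of convexity of power type 2, then F is d.c. on A with a control function of the form f(x) = c·|x|² for some constant c > 0. -/

import Mathlib

open Set Metric Bornology Filter NNReal

/-- `f` is a control function for `F` on the convex set `C`. -/
def IsControlOn {X Y : Type*} [NormedAddCommGroup X] [NormedSpace ℝ X]
    [NormedAddCommGroup Y] [NormedSpace ℝ Y]
    (C : Set X) (F : X → Y) (f : X → ℝ) : Prop :=
  ContinuousOn f C ∧
    ∀ φ : Y →L[ℝ] ℝ, ‖φ‖ ≤ 1 → ConvexOn ℝ C (fun x => φ (F x) + f x)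

/-- `F` is a d.c. (delta-convex) mapping on `C`. -/
def IsDCOn {X Y : Type*} [NormedAddCommGroup X] [NormedSpace ℝ X]
    [NormedAddCommGroup Y] [NormedSpace ℝ Y]
    (C : Set X) (F : X → Y) : Prop :=
  ContinuousOn F C ∧ ∃ f : X → ℝ, IsControlOn C F f

/-- `g` is a d.c. function on `C`: a difference of two continuous convex functions. -/
def IsDCFnOn {X : Type*} [NormedAddCommGroup X] [NormedSpace ℝ X]
    (C : Set X) (g : X → ℝ) : Prop :=
  ∃ p q : X → ℝ, ContinuousOn p C ∧ ContinuousOn q C ∧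
    ConvexOn ℝ C p ∧ ConvexOn ℝ C q ∧ ∀ x ∈ C, g x = p x - q x

/-- `A ⊂⊂ B`: some ε-enlargement of `A` is contained in `B`. -/
def SubSub {X : Type*} [NormedAddCommGroup X] (A B : Set X) : Prop :=
  ∃ ε > (0:ℝ), ∀ a ∈ A, ∀ y : X, ‖y‖ < ε → a + y ∈ B

/-- `N` is an equivalent norm on `Y` with modulus of convexity of power type 2. -/
def IsEquivNormPT2 {Y : Type*} [NormedAddCommGroup Y] [NormedSpace ℝ Y] (N : Y → ℝ) : Prop :=
  (∀ u v : Y, N (u + v) ≤ N u + N v) ∧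
  (∀ (a : ℝ) (u : Y), N (a • u) = |a| * N u) ∧
  (∃ c₁ c₂ : ℝ, 0 < c₁ ∧ 0 < c₂ ∧ ∀ u : Y, c₁ * ‖u‖ ≤ N u ∧ N u ≤ c₂ * ‖u‖) ∧
  (∃ a : ℝ, 0 < a ∧ ∀ ε : ℝ, ε ∈ Set.Ioc (0:ℝ) 2 → ∀ u v : Y,
    N u ≤ 1 → N v ≤ 1 → ε ≤ N (u - v) → a * ε ^ 2 ≤ 1 - N ((2⁻¹ : ℝ) • (u + v)))

/-- `G` is `C^{1,1}` on `U`: Fréchet differentiable with Lipschitz derivative. -/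
def IsC11On {X Y : Type*} [NormedAddCommGroup X] [NormedSpace ℝ X]
    [NormedAddCommGroup Y] [NormedSpace ℝ Y] (U : Set X) (G : X → Y) : Prop :=
  ∃ G' : X → X →L[ℝ] Y, (∀ x ∈ U, HasFDerivAt G (G' x) x) ∧
    ∃ L : NNReal, LipschitzOnWith L G' U

/-- `F` is locally d.c. on `C`: each point of `C` has a convex neighborhood `U`
with `F` d.c. on `U ∩ C`. -/
def LocallyDCOn {X Y : Type*} [NormedAddCommGroup X] [NormedSpace ℝ X]
    [NormedAddCommGroup Y] [NormedSpace ℝ Y] (C : Set X) (F : X → Y) : Prop :=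
  ∀ a ∈ C, ∃ U : Set X, U ∈ nhds a ∧ Convex ℝ U ∧ IsDCOn (U ∩ C) F


lemma unit_nonpos_of_midpoint (u : ℝ → ℝ) (hu : ContinuousOn u (Icc 0 1))
    (h0 : u 0 ≤ 0) (h1 : u 1 ≤ 0)
    (hm : ∀ s ∈ Icc (0:ℝ) 1, ∀ t ∈ Icc (0:ℝ) 1, u ((s+t)/2) ≤ (u s + u t)/2) :
    ∀ θ ∈ Icc (0:ℝ) 1, u θ ≤ 0 := by
  obtain ⟨θ₀, hθ₀, hmax⟩ := (isCompact_Icc (a := (0:ℝ)) (b := 1)).exists_isMaxOn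
    (nonempty_Icc.2 zero_le_one) hu
  intro θ hθ
  have hθmax : u θ ≤ u θ₀ := hmax hθ
  by_contra hpos
  push_neg at hpos
  have hM : 0 < u θ₀ := lt_of_lt_of_le hpos hθmax
  obtain ⟨hθ₀0, hθ₀1⟩ := hθ₀
  rcases le_or_gt (2*θ₀) 1 with hc | hc
  · have h2 : (2*θ₀) ∈ Icc (0:ℝ) 1 := ⟨by linarith, hc⟩
    have := hm 0 ⟨le_refl 0, zero_le_one⟩ (2*θ₀) h2
    have he : (0 + 2*θ₀)/2 = θ₀ := by ring
    rw [he] at this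
    have h3 : u (2*θ₀) ≤ u θ₀ := hmax h2
    linarith
  · have h2 : (2*θ₀ - 1) ∈ Icc (0:ℝ) 1 := ⟨by linarith, by linarith⟩
    have := hm (2*θ₀-1) h2 1 ⟨zero_le_one, le_refl 1⟩
    have he : (2*θ₀ - 1 + 1)/2 = θ₀ := by ring
    rw [he] at this
    have h3 : u (2*θ₀-1) ≤ u θ₀ := hmax h2
    linarith

lemma convexOn_of_midpoint {X : Type*} [NormedAddCommGroup X] [NormedSpace ℝ X]
    (C : Set X) (hC : Convex ℝ C) (h : X → ℝ) (hcont : ContinuousOn h C)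
    (hmid : ∀ p ∈ C, ∀ q ∈ C, h ((2⁻¹:ℝ) • (p+q)) ≤ (h p + h q)/2) :
    ConvexOn ℝ C h := by
  refine ⟨hC, ?_⟩
  intro x hx y hy lam mu hlam hmu hsum
  set γ : ℝ → X := fun θ => x + θ • (y - x) with hγ
  have hγmem : ∀ θ ∈ Icc (0:ℝ) 1, γ θ ∈ C := by
    intro θ hθ
    have : γ θ = (1-θ) • x + θ • y := by simp only [hγ]; module
    rw [this]
    exact hC hx hy (by linarith [hθ.2]) hθ.1 (by ring)
  set u : ℝ → ℝ := fun θ => h (γ θ) - ((1-θ) * h x + θ * h y) with hu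
  have hucont : ContinuousOn u (Icc 0 1) := by
    apply ContinuousOn.sub
    · exact hcont.comp (by fun_prop) hγmem
    · fun_prop
  have hγmid : ∀ s t : ℝ, γ ((s+t)/2) = (2⁻¹:ℝ) • (γ s + γ t) := by
    intro s t; simp only [hγ]; match_scalars <;> ring
  have humid : ∀ s ∈ Icc (0:ℝ) 1, ∀ t ∈ Icc (0:ℝ) 1, u ((s+t)/2) ≤ (u s + u t)/2 := by
    intro s hs t ht
    have := hmid (γ s) (hγmem s hs) (γ t) (hγmem t ht)
    rw [← hγmid s t] at this
    simp only [hu]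
    linarith
  have h0 : u 0 ≤ 0 := by simp [hu, hγ]
  have h1 : u 1 ≤ 0 := by simp [hu, hγ]
  have key := unit_nonpos_of_midpoint u hucont h0 h1 humid mu ⟨hmu, by linarith⟩
  have hγmu : γ mu = lam • x + mu • y := by
    simp only [hγ]
    have : lam = 1 - mu := by linarith
    rw [this]; module
  simp only [hu, hγmu] at key
  simp only [smul_eq_mul]
  have hl : (1:ℝ) - mu = lam := by linarith
  rw [hl] at key
  linarith


section SConv
variable {X : Type*} [NormedAddCommGroup X] [NormedSpace ℝ X]
  (N : X → ℝ)
  (subadd : ∀ u v : X, N (u+v) ≤ N u + N v)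
  (homog : ∀ (b : ℝ) (u : X), N (b • u) = |b| * N u)
  (Nnonneg : ∀ u : X, 0 ≤ N u)

include subadd homog Nnonneg in
lemma sconv_sorted (a : ℝ) (ha : 0 < a) (ha4 : a ≤ 1/4)
    (hmod : ∀ ε : ℝ, ε ∈ Set.Ioc (0:ℝ) 2 → ∀ u v : X, N u ≤ 1 → N v ≤ 1 → ε ≤ N (u - v) →
      a * ε ^ 2 ≤ 1 - N ((2⁻¹ : ℝ) • (u + v)))
    (x y : X) (hxy : N y ≤ N x) :
    N ((2⁻¹:ℝ) • (x+y))^2 + (a/64) * N (x-y)^2 ≤ (N x^2 + N y^2)/2 := by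
  set r := N x with hr
  set s := N y with hs
  set d := N (x - y) with hd
  have hs0 : 0 ≤ s := Nnonneg y
  have hr0 : 0 ≤ r := Nnonneg x
  have hd0 : 0 ≤ d := Nnonneg _
  have hNneg : ∀ u : X, N (-u) = N u := by
    intro u
    have := homog (-1 : ℝ) u
    simpa using this
  have htd : r - s ≤ d := by
    have h1 : N x ≤ N y + N (x - y) := by
      have := subadd y (x - y)
      simpa using this
    linarith
  have hdr : d ≤ r + s := by
    have h1 : N (x - y) ≤ N x + N (-y) := by
      have := subadd x (-y)
      simpa [sub_eq_add_neg] using this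
    rw [hNneg y] at h1
    linarith
  have hmle : N ((2⁻¹:ℝ) • (x+y)) ≤ (r + s)/2 := by
    have h1 := homog (2⁻¹ : ℝ) (x + y)
    have h2 := subadd x y
    rw [h1]
    rw [abs_of_pos (by norm_num : (0:ℝ) < (2⁻¹:ℝ))]
    nlinarith
  have hmnn : 0 ≤ N ((2⁻¹:ℝ) • (x+y)) := Nnonneg _
  set P := N ((2⁻¹:ℝ) • (x+y)) with hP
  rcases le_or_gt d (4*(r-s)) with hcase | hcase
  · -- Case A : d ≤ 4t
    have hsq : P^2 ≤ ((r+s)/2)^2 := pow_le_pow_left₀ hmnn hmle 2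
    nlinarith [sq_nonneg (r - s), sq_nonneg d]
  · -- Case B : 4t < d
    have hd0' : 0 < d := by nlinarith
    have hr0' : 0 < r := by linarith [htd, hdr]
    have hrne : r ≠ 0 := ne_of_gt hr0'
    have hs0' : r/2 < s := by linarith
    have hspos : 0 < s := by linarith
    have hsne : s ≠ 0 := ne_of_gt hspos
    set y' := (r/s) • y with hy'
    have hNy' : N y' = r := by
      rw [hy', homog, abs_of_pos (by positivity), ← hs]
      field_simp
    have hyy' : N (y' - y) = r - s := by
      have he : y' - y = ((r-s)/s) • y := by
        rw [hy']; match_scalars; field_simp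
      rw [he, homog, abs_of_nonneg (div_nonneg (by linarith) hs0), ← hs]
      field_simp
    have hxy' : d - (r-s) ≤ N (x - y') := by
      have h1 : N (x - y) ≤ N (x - y') + N (y' - y) := by
        have := subadd (x - y') (y' - y)
        simpa using this
      rw [hyy'] at h1
      linarith
    set ε : ℝ := (d - (r-s))/r with hε
    have hεpos : 0 < ε := by
      apply div_pos _ hr0'
      linarith
    have hε2 : ε ≤ 2 := by
      rw [hε, div_le_iff₀ hr0']
      linarith
    have hmodap := hmod ε ⟨hεpos, hε2⟩ (r⁻¹ • x) (r⁻¹ • y')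
      (by rw [homog, abs_of_pos (by positivity), ← hr]; field_simp; exact le_rfl)
      (by rw [homog, abs_of_pos (by positivity), hNy']; field_simp; exact le_rfl)
      (by
        have he : r⁻¹ • x - r⁻¹ • y' = r⁻¹ • (x - y') := by module
        rw [he, homog, abs_of_pos (by positivity), hε]
        rw [div_le_iff₀ hr0']
        have hee : r⁻¹ * N (x - y') * r = N (x - y') := by field_simp
        rw [hee]
        exact hxy')
    set m' := (2⁻¹:ℝ) • (x + y') with hm'
    have hsmul : N ((2⁻¹:ℝ) • (r⁻¹ • x + r⁻¹ • y')) = r⁻¹ * N m' := by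
      have he : (2⁻¹:ℝ) • (r⁻¹ • x + r⁻¹ • y') = r⁻¹ • m' := by rw [hm']; module
      rw [he, homog, abs_of_pos (by positivity)]
    rw [hsmul] at hmodap
    -- G1 : a * (d - (r-s))^2 ≤ r^2 - r * N m'
    have hG1 : a * (d - (r-s))^2 ≤ r^2 - r * N m' := by
      have h1 : a * ε^2 * r^2 ≤ (1 - r⁻¹ * N m') * r^2 := by
        apply mul_le_mul_of_nonneg_right hmodap (by positivity)
      have h2 : a * ε^2 * r^2 = a * (d - (r-s))^2 := by
        rw [hε]; field_simp
      have h3 : (1 - r⁻¹ * N m') * r^2 = r^2 - r * N m' := by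
        field_simp
      rw [h2, h3] at h1
      exact h1
    -- combo : midpoint m = (s/r) • m' + ((r-s)/(2r)) • x
    have hcombo : (2⁻¹:ℝ) • (x + y) = (s/r) • m' + ((r-s)/(2*r)) • x := by
      rw [hm', hy']; match_scalars <;> field_simp <;> ring
    clear_value ε
    have hNm_le : P ≤ (s/r) * N m' + ((r-s)/(2*r)) * r := by
      have e1 : N ((s/r) • m') = (s/r) * N m' := by
        rw [homog, abs_of_nonneg (div_nonneg hs0 hr0)]
      have e2 : N (((r-s)/(2*r)) • x) = ((r-s)/(2*r)) * r := by
        rw [homog, abs_of_nonneg (div_nonneg (by linarith) (by linarith)), ← hr]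
      calc P = N ((s/r) • m' + ((r-s)/(2*r)) • x) := by rw [hP, hcombo]
        _ ≤ N ((s/r) • m') + N (((r-s)/(2*r)) • x) := subadd _ _
        _ = (s/r) * N m' + ((r-s)/(2*r)) * r := by rw [e1, e2]
    clear_value m' y'
    clear_value r s d P
    -- G3 : r^2 * N m ≤ r^2*(r+s)/2 - G  with  G := a*s*(d-(r-s))^2
    set G : ℝ := a * s * (d - (r-s))^2 with hG
    clear_value G
    have hG0 : 0 ≤ G := by rw [hG]; positivity
    have hG3 : r^2 * P ≤ r^2*(r+s)/2 - G := by
      have h1 : r^2 * P ≤ r^2 * ((s/r) * N m' + ((r-s)/(2*r)) * r) :=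
        mul_le_mul_of_nonneg_left hNm_le (by positivity)
      have h2 : r^2 * ((s/r) * N m' + ((r-s)/(2*r)) * r) = s * (r * N m') + (r-s)*r^2/2 := by
        field_simp
      have h3 : s * (r * N m') ≤ s * (r^2 - a * (d - (r-s))^2) :=
        mul_le_mul_of_nonneg_left (by linarith) hs0
      have h4 : s * (r^2 - a * (d - (r-s))^2) = s*r^2 - a*s*(d - (r-s))^2 := by ring
      rw [h2] at h1
      rw [hG]
      linarith [h1, h3, h4]
    clear hG1 hNm_le hmodap hsmul hcombo
    clear hmod subadd homog Nnonneg hNneg hP hε hεpos hε2 hxy' hyy' hNy' hy' hm'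
    clear hd hs hr
    clear m' y' ε x y
    -- auxiliary polynomial facts
    have hQ0 : 0 ≤ d - (r-s) := by linarith
    have hG_le : G ≤ s * r^2 := by
      have h1 : d - (r-s) ≤ 2*r := by linarith
      have h2 : (d - (r-s))^2 ≤ (2*r)^2 := pow_le_pow_left₀ hQ0 h1 2
      have h3 : a*s*(d - (r-s))^2 ≤ a*s*((2*r)^2) :=
        mul_le_mul_of_nonneg_left h2 (mul_nonneg ha.le hs0)
      have h4 : 0 ≤ (1/4 - a) * (s * r^2) :=
        mul_nonneg (by linarith) (mul_nonneg hs0 (sq_nonneg r))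
      rw [hG]
      linarith [h3, h4]
    have hG_ge : (9*a/32) * (r * d^2) ≤ G := by
      have h1 : (3/4)*d ≤ d - (r-s) := by linarith
      have h2 : ((3/4)*d)^2 ≤ (d - (r-s))^2 :=
        pow_le_pow_left₀ (by linarith) h1 2
      have h3 : a*s*(((3/4)*d)^2) ≤ a*s*(d - (r-s))^2 :=
        mul_le_mul_of_nonneg_left h2 (mul_nonneg ha.le hs0)
      have h4 : 0 ≤ (a * d^2) * (s - r/2) :=
        mul_nonneg (mul_nonneg ha.le (sq_nonneg d)) (by linarith)
      rw [hG]
      linarith [h3, h4]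
    -- step : G^2 + (a/64)*d^2*r^4 ≤ r^2*(r+s)*G
    have hstep : G^2 + (a/64)*d^2*r^4 ≤ r^2*(r+s)*G := by
      have hA1 : 0 ≤ (s*r^2 - G) * G := mul_nonneg (by linarith) hG0
      have hA2 : r^3 * ((9*a/32) * (r * d^2)) ≤ r^3 * G :=
        mul_le_mul_of_nonneg_left hG_ge (by positivity)
      have hA3 : 0 ≤ a * (r^4 * d^2) :=
        mul_nonneg ha.le (mul_nonneg (by positivity) (sq_nonneg d))
      linarith [hA1, hA2, hA3]
    -- square it
    have hsq : (r^2 * P)^2 ≤ (r^2*(r+s)/2 - G)^2 :=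
      pow_le_pow_left₀ (mul_nonneg (by positivity) hmnn) hG3 2
    -- big : r^4 * (goal)
    have hbig : r^4 * (P^2 + (a/64) * d^2) ≤ r^4 * ((r^2 + s^2)/2) := by
      linarith [hsq, hstep, mul_nonneg (sq_nonneg (r^2)) (sq_nonneg (r-s)), sq_nonneg (r^2*(r+s)/2 - G), sq_nonneg (r^2*P)]
    have hr4 : (0:ℝ) < r^4 := by positivity
    have := (mul_le_mul_iff_of_pos_left hr4).mp hbig
    linarith
end SConv


lemma c11_midpoint_est {X Y : Type*} [NormedAddCommGroup X] [NormedSpace ℝ X]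
    [NormedAddCommGroup Y] [NormedSpace ℝ Y]
    {A : Set X} (hAconv : Convex ℝ A) {F : X → Y} {F' : X → X →L[ℝ] Y}
    (hF' : ∀ x ∈ A, HasFDerivAt F (F' x) x) {L : NNReal}
    (hLip : LipschitzOnWith L F' A)
    (φ : Y →L[ℝ] ℝ) (hφ : ‖φ‖ ≤ 1)
    {p q : X} (hp : p ∈ A) (hq : q ∈ A) :
    2 * φ (F ((2⁻¹:ℝ) • (p + q))) ≤ φ (F p) + φ (F q) + (L:ℝ) * ‖p - q‖^2 := by
  have hLip' := (lipschitzOnWith_iff_dist_le_mul).mp hLip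
  set m := (2⁻¹:ℝ) • (p + q) with hm
  have hmA : m ∈ A := by
    have h2 := hAconv hp hq (by norm_num : (0:ℝ) ≤ 2⁻¹) (by norm_num : (0:ℝ) ≤ 2⁻¹)
      (by norm_num)
    have he : (2⁻¹:ℝ) • p + (2⁻¹:ℝ) • q = m := by rw [hm]; module
    rwa [he] at h2
  -- key estimate along a segment
  have key : ∀ z ∈ A, ‖F z - F m - (F' m) (z - m)‖ ≤ (L:ℝ) * ‖z - m‖ * ‖z - m‖ := by
    intro z hz
    have hseg : segment ℝ m z ⊆ A := hAconv.segment_subset hmA hz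
    apply Convex.norm_image_sub_le_of_norm_hasFDerivWithin_le'
      (fun w hw => (hF' w (hseg hw)).hasFDerivWithinAt) ?_ (convex_segment m z)
      (left_mem_segment ℝ m z) (right_mem_segment ℝ m z)
    intro w hw
    have hwA : w ∈ A := hseg hw
    obtain ⟨α, β, hα, hβ, hαβ, hwEq⟩ := hw
    have hwm : w - m = β • (z - m) := by
      rw [← hwEq]
      have hab : α = 1 - β := by linarith
      rw [hab]; module
    have hdist : ‖w - m‖ ≤ ‖z - m‖ := by
      rw [hwm, norm_smul, Real.norm_eq_abs, abs_of_nonneg hβ]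
      nlinarith [norm_nonneg (z - m)]
    have hLw : ‖F' w - F' m‖ ≤ (L:ℝ) * ‖w - m‖ := by
      have h1 := hLip' w hwA m hmA
      rwa [dist_eq_norm, dist_eq_norm] at h1
    calc ‖F' w - F' m‖ ≤ (L:ℝ) * ‖w - m‖ := hLw
      _ ≤ (L:ℝ) * ‖z - m‖ := mul_le_mul_of_nonneg_left hdist L.coe_nonneg
  -- apply to p and q
  have hpm : p - m = (2⁻¹:ℝ) • (p - q) := by rw [hm]; module
  have hqm : q - m = -((2⁻¹:ℝ) • (p - q)) := by rw [hm]; module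
  have hnpm : ‖p - m‖ = ‖p - q‖/2 := by
    rw [hpm, norm_smul]; simp [Real.norm_eq_abs]; ring
  have hnqm : ‖q - m‖ = ‖p - q‖/2 := by
    rw [hqm, norm_neg, norm_smul]; simp [Real.norm_eq_abs]; ring
  have ep := key p hp
  have eq' := key q hq
  rw [hnpm] at ep
  rw [hnqm] at eq'
  -- bound φ of the errors
  have hφp : |φ (F p - F m - (F' m) (p - m))| ≤ (L:ℝ) * (‖p - q‖/2) * (‖p - q‖/2) := by
    calc |φ (F p - F m - (F' m) (p - m))| ≤ ‖φ‖ * ‖F p - F m - (F' m) (p - m)‖ :=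
          φ.le_opNorm _
      _ ≤ 1 * ((L:ℝ) * (‖p - q‖/2) * (‖p - q‖/2)) := by
          apply mul_le_mul hφ ep (norm_nonneg _) zero_le_one
      _ = (L:ℝ) * (‖p - q‖/2) * (‖p - q‖/2) := one_mul _
  have hφq : |φ (F q - F m - (F' m) (q - m))| ≤ (L:ℝ) * (‖p - q‖/2) * (‖p - q‖/2) := by
    calc |φ (F q - F m - (F' m) (q - m))| ≤ ‖φ‖ * ‖F q - F m - (F' m) (q - m)‖ :=
          φ.le_opNorm _
      _ ≤ 1 * ((L:ℝ) * (‖p - q‖/2) * (‖p - q‖/2)) := by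
          apply mul_le_mul hφ eq' (norm_nonneg _) zero_le_one
      _ = (L:ℝ) * (‖p - q‖/2) * (‖p - q‖/2) := one_mul _
  have hsum : (p - m) + (q - m) = 0 := by rw [hm]; module
  have hlin : φ ((F' m) (p - m)) + φ ((F' m) (q - m)) = 0 := by
    rw [← map_add, ← map_add, hsum]
    simp
  have hp' : φ (F p - F m - (F' m) (p - m))
      = φ (F p) - φ (F m) - φ ((F' m) (p - m)) := by simp
  have hq'' : φ (F q - F m - (F' m) (q - m))
      = φ (F q) - φ (F m) - φ ((F' m) (q - m)) := by simp
  rw [hp'] at hφp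
  rw [hq''] at hφq
  have h1 := abs_le.mp hφp
  have h2 := abs_le.mp hφq
  have hL0 : (0:ℝ) ≤ (L:ℝ) := L.coe_nonneg
  nlinarith [h1.1, h2.1, hlin, sq_nonneg ‖p - q‖, mul_nonneg hL0 (sq_nonneg ‖p - q‖)]

section SConvFull
variable {X : Type*} [NormedAddCommGroup X] [NormedSpace ℝ X]

lemma sconv_full (N : X → ℝ)
    (subadd : ∀ u v : X, N (u+v) ≤ N u + N v)
    (homog : ∀ (b : ℝ) (u : X), N (b • u) = |b| * N u)
    (Nnonneg : ∀ u : X, 0 ≤ N u)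
    (a : ℝ) (ha : 0 < a) (ha4 : a ≤ 1/4)
    (hmod : ∀ ε : ℝ, ε ∈ Set.Ioc (0:ℝ) 2 → ∀ u v : X, N u ≤ 1 → N v ≤ 1 → ε ≤ N (u - v) →
      a * ε ^ 2 ≤ 1 - N ((2⁻¹ : ℝ) • (u + v)))
    (x y : X) :
    N ((2⁻¹:ℝ) • (x+y))^2 + (a/64) * N (x-y)^2 ≤ (N x^2 + N y^2)/2 := by
  rcases le_total (N y) (N x) with hxy | hxy
  · exact sconv_sorted N subadd homog Nnonneg a ha ha4 hmod x y hxy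
  · have h := sconv_sorted N subadd homog Nnonneg a ha ha4 hmod y x hxy
    have e1 : y + x = x + y := by abel
    have e2 : N (y - x) = N (x - y) := by
      have he : y - x = (-1 : ℝ) • (x - y) := by module
      rw [he, homog]
      simp
    rw [e1, e2] at h
    linarith
end SConvFull

/-- A `C^{1,1}` mapping on an open convex subset of a space with an
equivalent norm `N` of modulus of convexity of power type 2 is d.c. with a control
function of the form `x ↦ c * (N x)^2`. -/
theorem dc_of_C11_uniformly_convex {X Y : Type*}
    [NormedAddCommGroup X] [NormedSpace ℝ X]
    [NormedAddCommGroup Y] [NormedSpace ℝ Y]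
    (A : Set X) (hAopen : IsOpen A) (hAconv : Convex ℝ A)
    (F : X → Y) (hF : IsC11On A F)
    (N : X → ℝ) (hN : IsEquivNormPT2 N) :
    ∃ c : ℝ, 0 < c ∧ ContinuousOn F A ∧ IsControlOn A F (fun x => c * (N x) ^ 2) := by
  obtain ⟨F', hF', L, hLip⟩ := hF
  obtain ⟨subadd, homog, ⟨c₁, c₂, hc₁, hc₂, hbound⟩, a, ha, hmod⟩ := hN
  have Nnonneg : ∀ u : X, 0 ≤ N u := fun u =>
    le_trans (mul_nonneg hc₁.le (norm_nonneg u)) (hbound u).1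
  -- replace a by a' = min a (1/4)
  set a' : ℝ := min a (1/4) with ha'def
  have ha' : 0 < a' := lt_min ha (by norm_num)
  have ha'4 : a' ≤ 1/4 := min_le_right _ _
  have hmod' : ∀ ε : ℝ, ε ∈ Set.Ioc (0:ℝ) 2 → ∀ u v : X, N u ≤ 1 → N v ≤ 1 →
      ε ≤ N (u - v) → a' * ε ^ 2 ≤ 1 - N ((2⁻¹ : ℝ) • (u + v)) := by
    intro ε hε u v hu hv huv
    have h1 := hmod ε hε u v hu hv huv
    have h2 : a' * ε ^ 2 ≤ a * ε ^ 2 :=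
      mul_le_mul_of_nonneg_right (min_le_left _ _) (sq_nonneg ε)
    linarith
  set K : ℝ := a'/64 with hKdef
  have hK : 0 < K := by positivity
  have hsc := sconv_full N subadd homog Nnonneg a' ha' ha'4 hmod'
  -- the constant
  set c : ℝ := ((L:ℝ) + 1)/(2*K*c₁^2) with hcdef
  have hc : 0 < c := by
    apply div_pos
    · have := L.coe_nonneg; linarith
    · have h1 : (0:ℝ) < 2*K := by linarith
      have h2 : (0:ℝ) < c₁^2 := pow_pos hc₁ 2
      exact mul_pos h1 h2
  have hck : 2*c*(K*c₁^2) = (L:ℝ) + 1 := by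
    rw [hcdef]
    field_simp
  -- continuity of F on A
  have hFcont : ContinuousOn F A := fun x hx =>
    (hF' x hx).continuousAt.continuousWithinAt
  -- continuity of N
  have hNlip : ∀ u v : X, |N u - N v| ≤ c₂ * ‖u - v‖ := by
    intro u v
    have h1 : N u ≤ N v + N (u - v) := by
      have := subadd v (u - v); simpa using this
    have h2 : N v ≤ N u + N (v - u) := by
      have := subadd u (v - u); simpa using this
    have h3 : N (v - u) = N (u - v) := by
      have he : v - u = (-1 : ℝ) • (u - v) := by module
      rw [he, homog]; simp
    have h4 : N (u - v) ≤ c₂ * ‖u - v‖ := (hbound (u - v)).2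
    rw [h3] at h2
    rw [abs_sub_le_iff]
    constructor <;> linarith
  have hNcont : Continuous N := by
    apply LipschitzWith.continuous (K := c₂.toNNReal)
    apply LipschitzWith.of_dist_le_mul
    intro u v
    rw [Real.dist_eq, dist_eq_norm, Real.coe_toNNReal c₂ hc₂.le]
    exact hNlip u v
  have hfcont : ContinuousOn (fun x => c * (N x)^2) A :=
    (continuous_const.mul (hNcont.pow 2)).continuousOn
  refine ⟨c, hc, hFcont, hfcont, ?_⟩
  intro φ hφ
  apply convexOn_of_midpoint A hAconv _
    ((φ.continuous.comp_continuousOn hFcont).add hfcont)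
  intro p hp q hq
  have h1 := c11_midpoint_est hAconv hF' hLip φ hφ hp hq
  have h2 := hsc p q
  have h3 : c₁^2 * ‖p - q‖^2 ≤ N (p - q)^2 := by
    have ha1 : c₁ * ‖p - q‖ ≤ N (p - q) := (hbound (p - q)).1
    have ha2 : (c₁ * ‖p - q‖)^2 ≤ N (p - q)^2 :=
      pow_le_pow_left₀ (mul_nonneg hc₁.le (norm_nonneg _)) ha1 2
    calc c₁^2 * ‖p - q‖^2 = (c₁ * ‖p - q‖)^2 := by ring
      _ ≤ N (p - q)^2 := ha2
  have h2c := mul_le_mul_of_nonneg_left h2 (show (0:ℝ) ≤ 2*c by positivity)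
  have h3c := mul_le_mul_of_nonneg_left h3 (show (0:ℝ) ≤ 2*c*K by positivity)
  have hck2 : 2*c*K*(c₁^2*‖p-q‖^2) = ((L:ℝ)+1)*‖p-q‖^2 := by
    linear_combination ‖p-q‖^2 * hck
  have hnn : (0:ℝ) ≤ ‖p - q‖^2 := sq_nonneg _
  rw [hKdef] at h3c hck2
  simp only [Pi.add_apply, Function.comp_apply]
  linarith [h1, h2c, h3c, hck2, hnn]
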